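/- Let g_∞ ∈ C²(S^{d-1}, ℝ) satisfy g_∞(ω)² + |∇_ω g_∞(ω)|² = n_∞(ω) for all ω ∈ S^{d-1}, where n_∞ ∈ C¹(S^{d-1}, ℝ). Suppose moreover g_∞ ≥ c > 0 and the operator norm of the Hessian ∇²_ω g_∞ is everywhere at most c/2. Then there exist constants 0 < c₁ ≤ c₂ such that c₁|∇_ω g_∞(ω)| ≤ |∇_ω n_∞(ω)| ≤ c₂|∇_ω g_∞(ω)| for all ω; in particular the critical points of n_∞ and g_∞ on the sphere coincide. -/

import Mathlib

open RealInnerProductSpace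

section aux
variable {E : Type*} [NormedAddCommGroup E] [InnerProductSpace ℝ E] [CompleteSpace E]

lemma inner_gradient_apply' (f : E → ℝ) (x v : E) :
    ⟪gradient f x, v⟫ = fderiv ℝ f x v := by
  simp [gradient, InnerProductSpace.toDual_symm_apply]

omit [CompleteSpace E] in
/-- Euler relation for `0`-homogeneous functions. -/
lemma euler_zero_hom' (f : E → ℝ) {ω : E} (hhom : ∀ t : ℝ, 0 < t → f (t • ω) = f ω)
    (hdiff : DifferentiableAt ℝ f ω) : fderiv ℝ f ω ω = 0 := by
  have h1 : HasDerivAt (fun t : ℝ => f (t • ω)) (fderiv ℝ f ω ω) 1 := by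
    have hd : HasDerivAt (fun t : ℝ => t • ω) ω 1 := by
      simpa using (hasDerivAt_id (1:ℝ)).smul_const ω
    have hdiff' : HasFDerivAt f (fderiv ℝ f ω) ((1:ℝ) • ω) := by
      simpa using hdiff.hasFDerivAt
    exact hdiff'.comp_hasDerivAt 1 hd
  have h2 : (fun t : ℝ => f (t • ω)) =ᶠ[nhds (1:ℝ)] fun _ => f ω := by
    filter_upwards [Ioi_mem_nhds (show (0:ℝ) < 1 by norm_num)] with t ht
    exact hhom t ht
  have h3 : HasDerivAt (fun t : ℝ => f (t • ω)) 0 1 :=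
    (hasDerivAt_const (1:ℝ) (f ω)).congr_of_eventuallyEq h2
  exact h1.unique h3

lemma grad_scale' (f : E → ℝ) (hhom : ∀ x : E, x ≠ 0 → ∀ t : ℝ, 0 < t → f (t • x) = f x)
    (hdiff : ∀ y : E, y ≠ 0 → DifferentiableAt ℝ f y)
    {x : E} (hx : x ≠ 0) {t : ℝ} (ht : 0 < t) :
    gradient f x = t • gradient f (t • x) := by
  have htx : t • x ≠ 0 := smul_ne_zero (ne_of_gt ht) hx
  have hsm : HasFDerivAt (fun y : E => t • y) (t • ContinuousLinearMap.id ℝ E) x :=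
    (hasFDerivAt_id x).const_smul t
  have hcomp : HasFDerivAt (fun y => f (t • y))
      ((fderiv ℝ f (t • x)).comp (t • ContinuousLinearMap.id ℝ E)) x :=
    (hdiff _ htx).hasFDerivAt.comp x hsm
  have heq : (fun y => f (t • y)) =ᶠ[nhds x] f := by
    filter_upwards [isOpen_ne.mem_nhds (show x ∈ {y : E | y ≠ (0:E)} from hx)] with y hy
    exact hhom y hy t ht
  have hfd : fderiv ℝ f x = (fderiv ℝ f (t • x)).comp (t • ContinuousLinearMap.id ℝ E) := by
    rw [← heq.fderiv_eq, hcomp.fderiv]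
  apply ext_inner_right ℝ
  intro v
  rw [inner_gradient_apply', real_inner_smul_left, inner_gradient_apply', hfd]
  simp [mul_comm]

end aux

/-- Differentiating the limiting eikonal equation `g_∞² + |∇_ω g_∞|² = n_∞` on the
sphere: if `g_∞ ≥ c > 0` and the (tangential) Hessian of `g_∞` has operator norm at
most `c/2`, then `c₁|∇_ω g_∞| ≤ |∇_ω n_∞| ≤ c₂|∇_ω g_∞|`; in particular the
critical points of `n_∞` and `g_∞` coincide.  Functions on the sphere are
represented by their `0`-homogeneous extensions to `ℝ^d \ {0}`, so that the
spherical gradient at a unit vector `ω` is the ambient gradient. -/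
theorem stmt_11 (d : ℕ) (c : ℝ) (hc : 0 < c)
    (ginf ninf : EuclideanSpace ℝ (Fin d) → ℝ)
    (hghom : ∀ x : EuclideanSpace ℝ (Fin d), x ≠ 0 → ∀ t : ℝ, 0 < t →
      ginf (t • x) = ginf x)
    (hnhom : ∀ x : EuclideanSpace ℝ (Fin d), x ≠ 0 → ∀ t : ℝ, 0 < t →
      ninf (t • x) = ninf x)
    (hg : ContDiffOn ℝ 2 ginf {x : EuclideanSpace ℝ (Fin d) | x ≠ 0})
    (hn : ContDiffOn ℝ 1 ninf {x : EuclideanSpace ℝ (Fin d) | x ≠ 0})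
    (heik : ∀ ω : EuclideanSpace ℝ (Fin d), ‖ω‖ = 1 →
      ginf ω ^ 2 + ‖gradient ginf ω‖ ^ 2 = ninf ω)
    (hlow : ∀ ω : EuclideanSpace ℝ (Fin d), ‖ω‖ = 1 → c ≤ ginf ω)
    (hHess : ∀ ω : EuclideanSpace ℝ (Fin d), ‖ω‖ = 1 →
      ∀ v : EuclideanSpace ℝ (Fin d), (inner ℝ v ω : ℝ) = 0 →
        ‖fderiv ℝ (gradient ginf) ω v‖ ≤ c / 2 * ‖v‖) :
    ∃ c₁ c₂ : ℝ, 0 < c₁ ∧ c₁ ≤ c₂ ∧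
      (∀ ω : EuclideanSpace ℝ (Fin d), ‖ω‖ = 1 →
        c₁ * ‖gradient ginf ω‖ ≤ ‖gradient ninf ω‖ ∧
        ‖gradient ninf ω‖ ≤ c₂ * ‖gradient ginf ω‖) ∧
      (∀ ω : EuclideanSpace ℝ (Fin d), ‖ω‖ = 1 →
        (gradient ninf ω = 0 ↔ gradient ginf ω = 0)) := by
  have hs : IsOpen {x : EuclideanSpace ℝ (Fin d) | x ≠ 0} := isOpen_ne
  -- differentiability facts
  have hgdiff : ∀ y : EuclideanSpace ℝ (Fin d), y ≠ 0 → DifferentiableAt ℝ ginf y := fun y hy =>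
    (hg.contDiffAt (hs.mem_nhds hy)).differentiableAt (by norm_num)
  have hndiff : ∀ y : EuclideanSpace ℝ (Fin d), y ≠ 0 → DifferentiableAt ℝ ninf y := fun y hy =>
    (hn.contDiffAt (hs.mem_nhds hy)).differentiableAt (by norm_num)
  have hGdiff : ∀ y : EuclideanSpace ℝ (Fin d), y ≠ 0 → DifferentiableAt ℝ (gradient ginf) y := by
    intro y hy
    have h1 : ContDiffAt ℝ 1 (fderiv ℝ ginf) y :=
      (hg.contDiffAt (hs.mem_nhds hy)).fderiv_right (m := 1) (by norm_num)
    have h2 : ContDiffAt ℝ 1 (gradient ginf) y :=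
      ((InnerProductSpace.toDual ℝ (EuclideanSpace ℝ (Fin d))).symm.contDiff
        (n := 1)).contDiffAt.comp y h1
    exact h2.differentiableAt (by norm_num)
  -- the function m agreeing with ninf away from 0
  set m : EuclideanSpace ℝ (Fin d) → ℝ :=
    fun x => ginf x * ginf x + ⟪x, x⟫ * ⟪(gradient ginf) x, (gradient ginf) x⟫ with hm_def
  have hnm : Set.EqOn ninf m {x : EuclideanSpace ℝ (Fin d) | x ≠ 0} := by
    intro x hx
    have hx0 : x ≠ 0 := hx
    have hxn : (0:ℝ) < ‖x‖ := norm_pos_iff.mpr hx0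
    have ht : (0:ℝ) < ‖x‖⁻¹ := inv_pos.mpr hxn
    have hω : ‖(‖x‖⁻¹ : ℝ) • x‖ = 1 := by
      rw [norm_smul, Real.norm_eq_abs, abs_of_pos ht]
      exact inv_mul_cancel₀ (ne_of_gt hxn)
    have h1 : ninf ((‖x‖⁻¹ : ℝ) • x) = ninf x := hnhom x hx0 _ ht
    have h2 : ginf ((‖x‖⁻¹ : ℝ) • x) = ginf x := hghom x hx0 _ ht
    have h3 : (gradient ginf) x = (‖x‖⁻¹ : ℝ) • (gradient ginf) ((‖x‖⁻¹ : ℝ) • x) := grad_scale' ginf hghom hgdiff hx0 ht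
    have h4 : ‖(gradient ginf) ((‖x‖⁻¹ : ℝ) • x)‖ = ‖x‖ * ‖(gradient ginf) x‖ := by
      have heq2 : (gradient ginf) ((‖x‖⁻¹ : ℝ) • x) = ‖x‖ • (gradient ginf) x := by
        rw [h3, smul_smul, mul_inv_cancel₀ (ne_of_gt hxn), one_smul]
      rw [heq2, norm_smul, Real.norm_eq_abs, abs_of_pos hxn]
    have h5 := heik _ hω
    have hxx : ⟪x, x⟫ = ‖x‖ ^ 2 := real_inner_self_eq_norm_sq x
    have hGG : ⟪(gradient ginf) x, (gradient ginf) x⟫ = ‖(gradient ginf) x‖ ^ 2 := real_inner_self_eq_norm_sq ((gradient ginf) x)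
    simp only [Set.mem_setOf_eq] at hx ⊢
    rw [← h1, ← h5, h2, hm_def]
    simp only [hxx, hGG, h4]
    ring
  -- bound for ginf on the sphere
  obtain ⟨M, hM⟩ : ∃ M, ∀ x ∈ Metric.sphere (0 : EuclideanSpace ℝ (Fin d)) 1, ‖ginf x‖ ≤ M := by
    apply (isCompact_sphere (0 : EuclideanSpace ℝ (Fin d)) 1).exists_bound_of_continuousOn
    exact hg.continuousOn.mono (fun x hx => by
      simp only [Metric.mem_sphere, dist_zero_right] at hx
      exact fun h0 => by simp [h0] at hx)
  -- the key identity
  have key : ∀ ω : EuclideanSpace ℝ (Fin d), ‖ω‖ = 1 → ∀ v : EuclideanSpace ℝ (Fin d),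
      ⟪gradient ninf ω, v⟫ = 2 * ginf ω * ⟪(gradient ginf) ω, v⟫ + 2 * ⟪ω, v⟫ * ⟪(gradient ginf) ω, (gradient ginf) ω⟫
        + 2 * ⟪(gradient ginf) ω, fderiv ℝ (gradient ginf) ω v⟫ := by
    intro ω hω v
    have hω0 : ω ≠ 0 := fun h => by rw [h, norm_zero] at hω; norm_num at hω
    have hEq : ninf =ᶠ[nhds ω] m :=
      Filter.eventuallyEq_of_mem (hs.mem_nhds hω0) hnm
    have hfd : fderiv ℝ ninf ω = fderiv ℝ m ω := hEq.fderiv_eq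
    have dp : DifferentiableAt ℝ (fun x : EuclideanSpace ℝ (Fin d) => ⟪x, x⟫) ω :=
      differentiableAt_fun_id.inner ℝ differentiableAt_fun_id
    have dq : DifferentiableAt ℝ (fun x => ⟪(gradient ginf) x, (gradient ginf) x⟫) ω :=
      (hGdiff ω hω0).inner ℝ (hGdiff ω hω0)
    have dg2 : DifferentiableAt ℝ (fun x => ginf x * ginf x) ω :=
      (hgdiff ω hω0).mul (hgdiff ω hω0)
    have hfm : fderiv ℝ m ω v
        = (ginf ω * fderiv ℝ ginf ω v + ginf ω * fderiv ℝ ginf ω v)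
          + (⟪ω, ω⟫ * (⟪(gradient ginf) ω, fderiv ℝ (gradient ginf) ω v⟫ + ⟪fderiv ℝ (gradient ginf) ω v, (gradient ginf) ω⟫)
             + ⟪(gradient ginf) ω, (gradient ginf) ω⟫ * (⟪ω, fderiv ℝ (fun x : EuclideanSpace ℝ (Fin d) => x) ω v⟫
                 + ⟪fderiv ℝ (fun x : EuclideanSpace ℝ (Fin d) => x) ω v, ω⟫)) := by
      rw [hm_def]
      rw [fderiv_fun_add dg2 (show DifferentiableAt ℝ (fun x => ⟪x, x⟫ * ⟪(gradient ginf) x, (gradient ginf) x⟫) ω from dp.mul dq)]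
      simp only [ContinuousLinearMap.add_apply]
      rw [fderiv_fun_mul (hgdiff ω hω0) (hgdiff ω hω0), fderiv_fun_mul dp dq]
      simp only [ContinuousLinearMap.add_apply, ContinuousLinearMap.smul_apply,
        smul_eq_mul]
      rw [fderiv_inner_apply ℝ (hGdiff ω hω0) (hGdiff ω hω0) v,
        fderiv_inner_apply ℝ differentiableAt_fun_id differentiableAt_fun_id v]
    have hωω : ⟪ω, ω⟫ = 1 := by
      rw [real_inner_self_eq_norm_sq, hω]; norm_num
    have hid : fderiv ℝ (fun x : EuclideanSpace ℝ (Fin d) => x) ω v = v := by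
      rw [fderiv_id']; rfl
    rw [inner_gradient_apply', hfd, hfm, hid, hωω]
    rw [show fderiv ℝ ginf ω v = ⟪(gradient ginf) ω, v⟫ from (inner_gradient_apply' ginf ω v).symm]
    rw [real_inner_comm (fderiv ℝ (gradient ginf) ω v) ((gradient ginf) ω), real_inner_comm v ω]
    ring
  -- Euler relations
  have hEulerg : ∀ ω : EuclideanSpace ℝ (Fin d), ‖ω‖ = 1 → ⟪(gradient ginf) ω, ω⟫ = 0 := by
    intro ω hω
    have hω0 : ω ≠ 0 := fun h => by rw [h, norm_zero] at hω; norm_num at hω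
    rw [inner_gradient_apply']
    exact euler_zero_hom' ginf (fun t ht => hghom ω hω0 t ht) (hgdiff ω hω0)
  have hEulern : ∀ ω : EuclideanSpace ℝ (Fin d), ‖ω‖ = 1 → ⟪gradient ninf ω, ω⟫ = 0 := by
    intro ω hω
    have hω0 : ω ≠ 0 := fun h => by rw [h, norm_zero] at hω; norm_num at hω
    rw [inner_gradient_apply']
    exact euler_zero_hom' ninf (fun t ht => hnhom ω hω0 t ht) (hndiff ω hω0)
  have hM0 : (0:ℝ) ≤ max M 0 := le_max_right M 0
  -- the main bounds
  have hbounds : ∀ ω : EuclideanSpace ℝ (Fin d), ‖ω‖ = 1 →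
      c * ‖gradient ginf ω‖ ≤ ‖gradient ninf ω‖ ∧
      ‖gradient ninf ω‖ ≤ (2 * max M 0 + c) * ‖gradient ginf ω‖ := by
    intro ω hω
    have huT : ⟪(gradient ginf) ω, ω⟫ = 0 := hEulerg ω hω
    have hwT : ⟪gradient ninf ω, ω⟫ = 0 := hEulern ω hω
    have hHu : ‖fderiv ℝ (gradient ginf) ω ((gradient ginf) ω)‖ ≤ c / 2 * ‖(gradient ginf) ω‖ := hHess ω hω ((gradient ginf) ω) huT
    have hHw : ‖fderiv ℝ (gradient ginf) ω (gradient ninf ω)‖ ≤ c / 2 * ‖gradient ninf ω‖ :=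
      hHess ω hω (gradient ninf ω) hwT
    have hgM : |ginf ω| ≤ max M 0 := by
      refine le_trans ?_ (le_max_left M 0)
      have := hM ω (by simp [hω])
      rwa [Real.norm_eq_abs] at this
    have hgc : c ≤ ginf ω := hlow ω hω
    constructor
    · -- lower bound
      have h1 : ⟪gradient ninf ω, (gradient ginf) ω⟫
          = 2 * ginf ω * ⟪(gradient ginf) ω, (gradient ginf) ω⟫ + 2 * ⟪(gradient ginf) ω, fderiv ℝ (gradient ginf) ω ((gradient ginf) ω)⟫ := by
        have hk := key ω hω ((gradient ginf) ω)
        have hcomm : ⟪ω, (gradient ginf) ω⟫ = 0 := by rw [real_inner_comm]; exact huT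
        rw [hk, hcomm]; ring
      have h2 : |⟪(gradient ginf) ω, fderiv ℝ (gradient ginf) ω ((gradient ginf) ω)⟫| ≤ c / 2 * ‖(gradient ginf) ω‖ ^ 2 := by
        calc |⟪(gradient ginf) ω, fderiv ℝ (gradient ginf) ω ((gradient ginf) ω)⟫| ≤ ‖(gradient ginf) ω‖ * ‖fderiv ℝ (gradient ginf) ω ((gradient ginf) ω)‖ :=
              abs_real_inner_le_norm _ _
        _ ≤ ‖(gradient ginf) ω‖ * (c / 2 * ‖(gradient ginf) ω‖) := mul_le_mul_of_nonneg_left hHu (norm_nonneg _)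
        _ = c / 2 * ‖(gradient ginf) ω‖ ^ 2 := by ring
      have h3 : c * ‖(gradient ginf) ω‖ ^ 2 ≤ ⟪gradient ninf ω, (gradient ginf) ω⟫ := by
        rw [h1, real_inner_self_eq_norm_sq]
        nlinarith [neg_abs_le (⟪(gradient ginf) ω, fderiv ℝ (gradient ginf) ω ((gradient ginf) ω)⟫), norm_nonneg ((gradient ginf) ω), h2]
      have h4 : ⟪gradient ninf ω, (gradient ginf) ω⟫ ≤ ‖gradient ninf ω‖ * ‖(gradient ginf) ω‖ := real_inner_le_norm _ _
      rcases eq_or_lt_of_le (norm_nonneg ((gradient ginf) ω)) with h0 | h0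
      · rw [← h0, mul_zero]; exact norm_nonneg _
      · have h5 : c * ‖(gradient ginf) ω‖ * ‖(gradient ginf) ω‖ ≤ ‖gradient ninf ω‖ * ‖(gradient ginf) ω‖ := by nlinarith
        exact le_of_mul_le_mul_right h5 h0
    · -- upper bound
      have h1 : ⟪gradient ninf ω, gradient ninf ω⟫
          = 2 * ginf ω * ⟪(gradient ginf) ω, gradient ninf ω⟫
            + 2 * ⟪(gradient ginf) ω, fderiv ℝ (gradient ginf) ω (gradient ninf ω)⟫ := by
        have hk := key ω hω (gradient ninf ω)
        have hcomm : ⟪ω, gradient ninf ω⟫ = 0 := by rw [real_inner_comm]; exact hwT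
        rw [hk, hcomm]; ring
      have h2 : |⟪(gradient ginf) ω, fderiv ℝ (gradient ginf) ω (gradient ninf ω)⟫|
          ≤ c / 2 * ‖gradient ninf ω‖ * ‖(gradient ginf) ω‖ := by
        calc |⟪(gradient ginf) ω, fderiv ℝ (gradient ginf) ω (gradient ninf ω)⟫|
            ≤ ‖(gradient ginf) ω‖ * ‖fderiv ℝ (gradient ginf) ω (gradient ninf ω)‖ := abs_real_inner_le_norm _ _
        _ ≤ ‖(gradient ginf) ω‖ * (c / 2 * ‖gradient ninf ω‖) :=
              mul_le_mul_of_nonneg_left hHw (norm_nonneg _)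
        _ = c / 2 * ‖gradient ninf ω‖ * ‖(gradient ginf) ω‖ := by ring
      have h3 : |⟪(gradient ginf) ω, gradient ninf ω⟫| ≤ ‖(gradient ginf) ω‖ * ‖gradient ninf ω‖ :=
        abs_real_inner_le_norm _ _
      have h4 : ‖gradient ninf ω‖ ^ 2 ≤ (2 * max M 0 + c) * ‖(gradient ginf) ω‖ * ‖gradient ninf ω‖ := by
        rw [← real_inner_self_eq_norm_sq, h1]
        have hprod : |ginf ω| * |⟪(gradient ginf) ω, gradient ninf ω⟫|
            ≤ max M 0 * (‖(gradient ginf) ω‖ * ‖gradient ninf ω‖) :=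
          mul_le_mul hgM h3 (abs_nonneg _) hM0
        have h5 : ginf ω * ⟪(gradient ginf) ω, gradient ninf ω⟫
            ≤ max M 0 * (‖(gradient ginf) ω‖ * ‖gradient ninf ω‖) := by
          refine le_trans (le_trans (le_abs_self _) ?_) hprod
          rw [abs_mul]
        have h6 : ⟪(gradient ginf) ω, fderiv ℝ (gradient ginf) ω (gradient ninf ω)⟫
            ≤ c / 2 * ‖gradient ninf ω‖ * ‖(gradient ginf) ω‖ := le_trans (le_abs_self _) h2
        nlinarith [h5, h6]
      rcases eq_or_lt_of_le (norm_nonneg (gradient ninf ω)) with h0 | h0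
      · rw [← h0]
        have hGn : (0:ℝ) ≤ ‖(gradient ginf) ω‖ := norm_nonneg _
        nlinarith
      · have h5 : ‖gradient ninf ω‖ * ‖gradient ninf ω‖
            ≤ ((2 * max M 0 + c) * ‖(gradient ginf) ω‖) * ‖gradient ninf ω‖ := by nlinarith
        exact le_of_mul_le_mul_right h5 h0
  refine ⟨c, 2 * max M 0 + c, hc, by linarith, hbounds, ?_⟩
  intro ω hω
  constructor
  · intro h0
    have h1 := (hbounds ω hω).1
    rw [h0, norm_zero] at h1
    have h2 : ‖gradient ginf ω‖ = 0 :=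
      le_antisymm (by nlinarith [norm_nonneg (gradient ginf ω)]) (norm_nonneg _)
    exact norm_eq_zero.mp h2
  · intro h0
    have h1 := (hbounds ω hω).2
    rw [h0, norm_zero, mul_zero] at h1
    exact norm_eq_zero.mp (le_antisymm h1 (norm_nonneg _))
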